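/- Let L be the Lie algebra sl(2,ℂ) ⊕ sl(2,ℂ) with standard bases {x_i, e_i, f_i} of the i-th summand (i = 1, 2), graded by H = (Z/2)^2 with L_{(0,0)} = span{x_1, x_2}, L_{(1,0)} = span{e_1, f_1}, L_{(1,1)} = span{e_2, f_2}, L_{(0,1)} = 0. Define ε' on H × H by ε'((0,0),(1,0)) = ε'((1,0),(0,0)) = -1 and ε' = 1 otherwise. Then the modified bracket [x,y]' = ε'(g,h)[x,y] for x ∈ L_g, y ∈ L_h makes L into a Lie algebra that is isomorphic to L via a grading-preserving isomorphism, but there is no isomorphism φ: L → L' acting as a nonzero scalar on each homogeneous component. -/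

import Mathlib

set_option maxHeartbeats 1600000 in

/-- Let `L = sl(2,ℂ) ⊕ sl(2,ℂ)` with standard bases
`{xᵢ, eᵢ, fᵢ}` of the summands, graded by `H = (ℤ/2)²` with
`L₍₀,₀₎ = ⟨x₁,x₂⟩`, `L₍₁,₀₎ = ⟨e₁,f₁⟩`, `L₍₁,₁₎ = ⟨e₂,f₂⟩`, `L₍₀,₁₎ = 0`.
Let `ε'((0,0),(1,0)) = ε'((1,0),(0,0)) = -1`, `ε' = 1` otherwise, and let `B'` be the
contracted bracket `[x,y]' = ε'(g,h)[x,y]`.  Then `B'` makes `L` into a Lie algebra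
isomorphic to `L` via a grading-preserving isomorphism, yet there is no isomorphism
`φ : L → L'` acting as a nonzero scalar on each homogeneous component. -/
theorem sl2_sl2_strong_not_normalized
    {L : Type*} [LieRing L] [LieAlgebra ℂ L]
    (x₁ x₂ e₁ f₁ e₂ f₂ : L)
    (hind : LinearIndependent ℂ ![x₁, x₂, e₁, f₁, e₂, f₂])
    (h1 : ⁅x₁, e₁⁆ = (2 : ℂ) • e₁) (h2 : ⁅x₁, f₁⁆ = (-2 : ℂ) • f₁) (h3 : ⁅e₁, f₁⁆ = x₁)
    (h4 : ⁅x₂, e₂⁆ = (2 : ℂ) • e₂) (h5 : ⁅x₂, f₂⁆ = (-2 : ℂ) • f₂) (h6 : ⁅e₂, f₂⁆ = x₂)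
    (hz1 : ⁅x₁, x₂⁆ = 0) (hz2 : ⁅x₁, e₂⁆ = 0) (hz3 : ⁅x₁, f₂⁆ = 0)
    (hz4 : ⁅e₁, x₂⁆ = 0) (hz5 : ⁅e₁, e₂⁆ = 0) (hz6 : ⁅e₁, f₂⁆ = 0)
    (hz7 : ⁅f₁, x₂⁆ = 0) (hz8 : ⁅f₁, e₂⁆ = 0) (hz9 : ⁅f₁, f₂⁆ = 0)
    (ℒ : ZMod 2 × ZMod 2 → Submodule ℂ L)
    (hL00 : ℒ (0, 0) = Submodule.span ℂ {x₁, x₂})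
    (hL10 : ℒ (1, 0) = Submodule.span ℂ {e₁, f₁})
    (hL11 : ℒ (1, 1) = Submodule.span ℂ {e₂, f₂})
    (hL01 : ℒ (0, 1) = ⊥)
    (hinternal : DirectSum.IsInternal ℒ)
    (ε' : ZMod 2 × ZMod 2 → ZMod 2 × ZMod 2 → ℂ)
    (hε' : ε' = fun g h =>
      if (g = (0, 0) ∧ h = (1, 0)) ∨ (g = (1, 0) ∧ h = (0, 0)) then -1 else 1)
    (B' : L →ₗ[ℂ] L →ₗ[ℂ] L)
    (hB' : ∀ g h : ZMod 2 × ZMod 2, ∀ x ∈ ℒ g, ∀ y ∈ ℒ h, B' x y = ε' g h • ⁅x, y⁆) :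
    (∀ x : L, B' x x = 0) ∧
    (∀ x y z : L, B' x (B' y z) + B' y (B' z x) + B' z (B' x y) = 0) ∧
    (∃ φ : L ≃ₗ[ℂ] L, (∀ x y : L, φ (B' x y) = ⁅φ x, φ y⁆) ∧
      ∀ g : ZMod 2 × ZMod 2, (ℒ g).map (φ : L →ₗ[ℂ] L) = ℒ g) ∧
    ¬ ∃ φ : L ≃ₗ[ℂ] L, (∀ x y : L, φ ⁅x, y⁆ = B' (φ x) (φ y)) ∧
      ∀ g : ZMod 2 × ZMod 2, ∃ c : ℂ, c ≠ 0 ∧ ∀ x ∈ ℒ g, φ x = c • x := by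
  classical
  -- basic memberships
  have mx₁ : x₁ ∈ ℒ (0, 0) := by rw [hL00]; exact Submodule.subset_span (by simp)
  have mx₂ : x₂ ∈ ℒ (0, 0) := by rw [hL00]; exact Submodule.subset_span (by simp)
  have me₁ : e₁ ∈ ℒ (1, 0) := by rw [hL10]; exact Submodule.subset_span (by simp)
  have mf₁ : f₁ ∈ ℒ (1, 0) := by rw [hL10]; exact Submodule.subset_span (by simp)
  have me₂ : e₂ ∈ ℒ (1, 1) := by rw [hL11]; exact Submodule.subset_span (by simp)
  have mf₂ : f₂ ∈ ℒ (1, 1) := by rw [hL11]; exact Submodule.subset_span (by simp)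
  -- reversed brackets
  have r1 : ⁅e₁, x₁⁆ = (-2 : ℂ) • e₁ := by rw [← lie_skew, h1]; module
  have r2 : ⁅f₁, x₁⁆ = (2 : ℂ) • f₁ := by rw [← lie_skew, h2]; module
  have r3 : ⁅f₁, e₁⁆ = -x₁ := by rw [← lie_skew, h3]
  have r4 : ⁅e₂, x₂⁆ = (-2 : ℂ) • e₂ := by rw [← lie_skew, h4]; module
  have r5 : ⁅f₂, x₂⁆ = (2 : ℂ) • f₂ := by rw [← lie_skew, h5]; module
  have r6 : ⁅f₂, e₂⁆ = -x₂ := by rw [← lie_skew, h6]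
  have rz1 : ⁅x₂, x₁⁆ = 0 := by rw [← lie_skew, hz1, neg_zero]
  have rz2 : ⁅e₂, x₁⁆ = 0 := by rw [← lie_skew, hz2, neg_zero]
  have rz3 : ⁅f₂, x₁⁆ = 0 := by rw [← lie_skew, hz3, neg_zero]
  have rz4 : ⁅x₂, e₁⁆ = 0 := by rw [← lie_skew, hz4, neg_zero]
  have rz5 : ⁅e₂, e₁⁆ = 0 := by rw [← lie_skew, hz5, neg_zero]
  have rz6 : ⁅f₂, e₁⁆ = 0 := by rw [← lie_skew, hz6, neg_zero]
  have rz7 : ⁅x₂, f₁⁆ = 0 := by rw [← lie_skew, hz7, neg_zero]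
  have rz8 : ⁅e₂, f₁⁆ = 0 := by rw [← lie_skew, hz8, neg_zero]
  have rz9 : ⁅f₂, f₁⁆ = 0 := by rw [← lie_skew, hz9, neg_zero]
  -- the basis
  set v : Fin 6 → L := ![x₁, x₂, e₁, f₁, e₂, f₂] with hvdef
  have hgcases : ∀ g : ZMod 2 × ZMod 2,
      g = (0, 0) ∨ g = (0, 1) ∨ g = (1, 0) ∨ g = (1, 1) := by decide
  have hspan : ⊤ ≤ Submodule.span ℂ (Set.range v) := by
    rw [← hinternal.submodule_iSup_eq_top]
    refine iSup_le fun g => ?_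
    rcases hgcases g with rfl | rfl | rfl | rfl
    · rw [hL00]
      refine Submodule.span_le.2 ?_
      rintro y (rfl | rfl)
      exacts [Submodule.subset_span ⟨0, rfl⟩, Submodule.subset_span ⟨1, rfl⟩]
    · rw [hL01]; exact bot_le
    · rw [hL10]
      refine Submodule.span_le.2 ?_
      rintro y (rfl | rfl)
      exacts [Submodule.subset_span ⟨2, rfl⟩, Submodule.subset_span ⟨3, rfl⟩]
    · rw [hL11]
      refine Submodule.span_le.2 ?_
      rintro y (rfl | rfl)
      exacts [Submodule.subset_span ⟨4, rfl⟩, Submodule.subset_span ⟨5, rfl⟩]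
  let b : Module.Basis (Fin 6) ℂ L := Module.Basis.mk hind hspan
  have hb : ∀ i, b i = v i := fun i => Module.Basis.mk_apply hind hspan i
  -- the two linear maps
  set w : Fin 6 → L := ![x₁, x₂, f₁, -e₁, e₂, f₂] with hwdef
  set u : Fin 6 → L := ![x₁, x₂, -f₁, e₁, e₂, f₂] with hudef
  have hv0 : v 0 = x₁ := rfl
  have hv1 : v 1 = x₂ := rfl
  have hv2 : v 2 = e₁ := rfl
  have hv3 : v 3 = f₁ := rfl
  have hv4 : v 4 = e₂ := rfl
  have hv5 : v 5 = f₂ := rfl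
  let φ0 : L →ₗ[ℂ] L := b.constr ℂ w
  let ψ0 : L →ₗ[ℂ] L := b.constr ℂ u
  have hφv : ∀ i, φ0 (v i) = w i := fun i => by
    rw [← hb]; exact b.constr_basis ℂ w i
  have hψv : ∀ i, ψ0 (v i) = u i := fun i => by
    rw [← hb]; exact b.constr_basis ℂ u i
  have φx₁ : φ0 x₁ = x₁ := hφv 0
  have φx₂ : φ0 x₂ = x₂ := hφv 1
  have φe₁ : φ0 e₁ = f₁ := hφv 2
  have φf₁ : φ0 f₁ = -e₁ := hφv 3
  have φe₂ : φ0 e₂ = e₂ := hφv 4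
  have φf₂ : φ0 f₂ = f₂ := hφv 5
  have ψx₁ : ψ0 x₁ = x₁ := hψv 0
  have ψx₂ : ψ0 x₂ = x₂ := hψv 1
  have ψe₁ : ψ0 e₁ = -f₁ := hψv 2
  have ψf₁ : ψ0 f₁ = e₁ := hψv 3
  have ψe₂ : ψ0 e₂ = e₂ := hψv 4
  have ψf₂ : ψ0 f₂ = f₂ := hψv 5
  have hcomp1 : φ0 ∘ₗ ψ0 = LinearMap.id := by
    refine b.ext fun i => ?_
    rw [hb]
    fin_cases i
    · show φ0 (ψ0 x₁) = x₁; rw [ψx₁, φx₁]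
    · show φ0 (ψ0 x₂) = x₂; rw [ψx₂, φx₂]
    · show φ0 (ψ0 e₁) = e₁; rw [ψe₁, map_neg, φf₁, neg_neg]
    · show φ0 (ψ0 f₁) = f₁; rw [ψf₁, φe₁]
    · show φ0 (ψ0 e₂) = e₂; rw [ψe₂, φe₂]
    · show φ0 (ψ0 f₂) = f₂; rw [ψf₂, φf₂]
  have hcomp2 : ψ0 ∘ₗ φ0 = LinearMap.id := by
    refine b.ext fun i => ?_
    rw [hb]
    fin_cases i
    · show ψ0 (φ0 x₁) = x₁; rw [φx₁, ψx₁]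
    · show ψ0 (φ0 x₂) = x₂; rw [φx₂, ψx₂]
    · show ψ0 (φ0 e₁) = e₁; rw [φe₁, ψf₁]
    · show ψ0 (φ0 f₁) = f₁; rw [φf₁, map_neg, ψe₁, neg_neg]
    · show ψ0 (φ0 e₂) = e₂; rw [φe₂, ψe₂]
    · show ψ0 (φ0 f₂) = f₂; rw [φf₂, ψf₂]
  let φ : L ≃ₗ[ℂ] L := LinearEquiv.ofLinear φ0 ψ0 hcomp1 hcomp2
  -- degrees
  set deg : Fin 6 → ZMod 2 × ZMod 2 := ![(0,0), (0,0), (1,0), (1,0), (1,1), (1,1)]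
    with hdegdef
  have hd0 : deg 0 = (0, 0) := rfl
  have hd1 : deg 1 = (0, 0) := rfl
  have hd2 : deg 2 = (1, 0) := rfl
  have hd3 : deg 3 = (1, 0) := rfl
  have hd4 : deg 4 = (1, 1) := rfl
  have hd5 : deg 5 = (1, 1) := rfl
  have hmem : ∀ i, v i ∈ ℒ (deg i) := by
    intro i
    fin_cases i
    exacts [mx₁, mx₂, me₁, mf₁, me₂, mf₂]
  have hBij : ∀ i j, B' (v i) (v j) = ε' (deg i) (deg j) • ⁅v i, v j⁆ :=
    fun i j => hB' _ _ _ (hmem i) _ (hmem j)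
  -- the key bilinear identity
  let Br : L →ₗ[ℂ] L →ₗ[ℂ] L :=
    LinearMap.mk₂ ℂ (fun a c => ⁅a, c⁆) add_lie smul_lie lie_add lie_smul
  have hE0000 : ε' (0, 0) (0, 0) = 1 := by rw [hε']; exact if_neg (by decide)
  have hE0010 : ε' (0, 0) (1, 0) = -1 := by rw [hε']; exact if_pos (by decide)
  have hE0011 : ε' (0, 0) (1, 1) = 1 := by rw [hε']; exact if_neg (by decide)
  have hE1000 : ε' (1, 0) (0, 0) = -1 := by rw [hε']; exact if_pos (by decide)
  have hE1010 : ε' (1, 0) (1, 0) = 1 := by rw [hε']; exact if_neg (by decide)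
  have hE1011 : ε' (1, 0) (1, 1) = 1 := by rw [hε']; exact if_neg (by decide)
  have hE1100 : ε' (1, 1) (0, 0) = 1 := by rw [hε']; exact if_neg (by decide)
  have hE1110 : ε' (1, 1) (1, 0) = 1 := by rw [hε']; exact if_neg (by decide)
  have hE1111 : ε' (1, 1) (1, 1) = 1 := by rw [hε']; exact if_neg (by decide)
  have k00 : φ0 (B' x₁ x₁) = ⁅φ0 x₁, φ0 x₁⁆ := by
    rw [hB' _ _ _ mx₁ _ mx₁, hE0000]
    simp [h1, h2, h3, h4, h5, h6, hz1, hz2, hz3, hz4, hz5, hz6, hz7, hz8, hz9, r1, r2, r3, r4, r5, r6, rz1, rz2, rz3, rz4, rz5, rz6, rz7, rz8, rz9, lie_self, φx₁, φx₂, φe₁, φf₁, φe₂, φf₂, smul_smul]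
    try module
  have k01 : φ0 (B' x₁ x₂) = ⁅φ0 x₁, φ0 x₂⁆ := by
    rw [hB' _ _ _ mx₁ _ mx₂, hE0000]
    simp [h1, h2, h3, h4, h5, h6, hz1, hz2, hz3, hz4, hz5, hz6, hz7, hz8, hz9, r1, r2, r3, r4, r5, r6, rz1, rz2, rz3, rz4, rz5, rz6, rz7, rz8, rz9, lie_self, φx₁, φx₂, φe₁, φf₁, φe₂, φf₂, smul_smul]
    try module
  have k02 : φ0 (B' x₁ e₁) = ⁅φ0 x₁, φ0 e₁⁆ := by
    rw [hB' _ _ _ mx₁ _ me₁, hE0010]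
    simp [h1, h2, h3, h4, h5, h6, hz1, hz2, hz3, hz4, hz5, hz6, hz7, hz8, hz9, r1, r2, r3, r4, r5, r6, rz1, rz2, rz3, rz4, rz5, rz6, rz7, rz8, rz9, lie_self, φx₁, φx₂, φe₁, φf₁, φe₂, φf₂, smul_smul]
    try module
  have k03 : φ0 (B' x₁ f₁) = ⁅φ0 x₁, φ0 f₁⁆ := by
    rw [hB' _ _ _ mx₁ _ mf₁, hE0010]
    simp [h1, h2, h3, h4, h5, h6, hz1, hz2, hz3, hz4, hz5, hz6, hz7, hz8, hz9, r1, r2, r3, r4, r5, r6, rz1, rz2, rz3, rz4, rz5, rz6, rz7, rz8, rz9, lie_self, φx₁, φx₂, φe₁, φf₁, φe₂, φf₂, smul_smul]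
    try module
  have k04 : φ0 (B' x₁ e₂) = ⁅φ0 x₁, φ0 e₂⁆ := by
    rw [hB' _ _ _ mx₁ _ me₂, hE0011]
    simp [h1, h2, h3, h4, h5, h6, hz1, hz2, hz3, hz4, hz5, hz6, hz7, hz8, hz9, r1, r2, r3, r4, r5, r6, rz1, rz2, rz3, rz4, rz5, rz6, rz7, rz8, rz9, lie_self, φx₁, φx₂, φe₁, φf₁, φe₂, φf₂, smul_smul]
    try module
  have k05 : φ0 (B' x₁ f₂) = ⁅φ0 x₁, φ0 f₂⁆ := by
    rw [hB' _ _ _ mx₁ _ mf₂, hE0011]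
    simp [h1, h2, h3, h4, h5, h6, hz1, hz2, hz3, hz4, hz5, hz6, hz7, hz8, hz9, r1, r2, r3, r4, r5, r6, rz1, rz2, rz3, rz4, rz5, rz6, rz7, rz8, rz9, lie_self, φx₁, φx₂, φe₁, φf₁, φe₂, φf₂, smul_smul]
    try module
  have k10 : φ0 (B' x₂ x₁) = ⁅φ0 x₂, φ0 x₁⁆ := by
    rw [hB' _ _ _ mx₂ _ mx₁, hE0000]
    simp [h1, h2, h3, h4, h5, h6, hz1, hz2, hz3, hz4, hz5, hz6, hz7, hz8, hz9, r1, r2, r3, r4, r5, r6, rz1, rz2, rz3, rz4, rz5, rz6, rz7, rz8, rz9, lie_self, φx₁, φx₂, φe₁, φf₁, φe₂, φf₂, smul_smul]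
    try module
  have k11 : φ0 (B' x₂ x₂) = ⁅φ0 x₂, φ0 x₂⁆ := by
    rw [hB' _ _ _ mx₂ _ mx₂, hE0000]
    simp [h1, h2, h3, h4, h5, h6, hz1, hz2, hz3, hz4, hz5, hz6, hz7, hz8, hz9, r1, r2, r3, r4, r5, r6, rz1, rz2, rz3, rz4, rz5, rz6, rz7, rz8, rz9, lie_self, φx₁, φx₂, φe₁, φf₁, φe₂, φf₂, smul_smul]
    try module
  have k12 : φ0 (B' x₂ e₁) = ⁅φ0 x₂, φ0 e₁⁆ := by
    rw [hB' _ _ _ mx₂ _ me₁, hE0010]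
    simp [h1, h2, h3, h4, h5, h6, hz1, hz2, hz3, hz4, hz5, hz6, hz7, hz8, hz9, r1, r2, r3, r4, r5, r6, rz1, rz2, rz3, rz4, rz5, rz6, rz7, rz8, rz9, lie_self, φx₁, φx₂, φe₁, φf₁, φe₂, φf₂, smul_smul]
    try module
  have k13 : φ0 (B' x₂ f₁) = ⁅φ0 x₂, φ0 f₁⁆ := by
    rw [hB' _ _ _ mx₂ _ mf₁, hE0010]
    simp [h1, h2, h3, h4, h5, h6, hz1, hz2, hz3, hz4, hz5, hz6, hz7, hz8, hz9, r1, r2, r3, r4, r5, r6, rz1, rz2, rz3, rz4, rz5, rz6, rz7, rz8, rz9, lie_self, φx₁, φx₂, φe₁, φf₁, φe₂, φf₂, smul_smul]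
    try module
  have k14 : φ0 (B' x₂ e₂) = ⁅φ0 x₂, φ0 e₂⁆ := by
    rw [hB' _ _ _ mx₂ _ me₂, hE0011]
    simp [h1, h2, h3, h4, h5, h6, hz1, hz2, hz3, hz4, hz5, hz6, hz7, hz8, hz9, r1, r2, r3, r4, r5, r6, rz1, rz2, rz3, rz4, rz5, rz6, rz7, rz8, rz9, lie_self, φx₁, φx₂, φe₁, φf₁, φe₂, φf₂, smul_smul]
    try module
  have k15 : φ0 (B' x₂ f₂) = ⁅φ0 x₂, φ0 f₂⁆ := by
    rw [hB' _ _ _ mx₂ _ mf₂, hE0011]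
    simp [h1, h2, h3, h4, h5, h6, hz1, hz2, hz3, hz4, hz5, hz6, hz7, hz8, hz9, r1, r2, r3, r4, r5, r6, rz1, rz2, rz3, rz4, rz5, rz6, rz7, rz8, rz9, lie_self, φx₁, φx₂, φe₁, φf₁, φe₂, φf₂, smul_smul]
    try module
  have k20 : φ0 (B' e₁ x₁) = ⁅φ0 e₁, φ0 x₁⁆ := by
    rw [hB' _ _ _ me₁ _ mx₁, hE1000]
    simp [h1, h2, h3, h4, h5, h6, hz1, hz2, hz3, hz4, hz5, hz6, hz7, hz8, hz9, r1, r2, r3, r4, r5, r6, rz1, rz2, rz3, rz4, rz5, rz6, rz7, rz8, rz9, lie_self, φx₁, φx₂, φe₁, φf₁, φe₂, φf₂, smul_smul]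
    try module
  have k21 : φ0 (B' e₁ x₂) = ⁅φ0 e₁, φ0 x₂⁆ := by
    rw [hB' _ _ _ me₁ _ mx₂, hE1000]
    simp [h1, h2, h3, h4, h5, h6, hz1, hz2, hz3, hz4, hz5, hz6, hz7, hz8, hz9, r1, r2, r3, r4, r5, r6, rz1, rz2, rz3, rz4, rz5, rz6, rz7, rz8, rz9, lie_self, φx₁, φx₂, φe₁, φf₁, φe₂, φf₂, smul_smul]
    try module
  have k22 : φ0 (B' e₁ e₁) = ⁅φ0 e₁, φ0 e₁⁆ := by
    rw [hB' _ _ _ me₁ _ me₁, hE1010]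
    simp [h1, h2, h3, h4, h5, h6, hz1, hz2, hz3, hz4, hz5, hz6, hz7, hz8, hz9, r1, r2, r3, r4, r5, r6, rz1, rz2, rz3, rz4, rz5, rz6, rz7, rz8, rz9, lie_self, φx₁, φx₂, φe₁, φf₁, φe₂, φf₂, smul_smul]
    try module
  have k23 : φ0 (B' e₁ f₁) = ⁅φ0 e₁, φ0 f₁⁆ := by
    rw [hB' _ _ _ me₁ _ mf₁, hE1010]
    simp [h1, h2, h3, h4, h5, h6, hz1, hz2, hz3, hz4, hz5, hz6, hz7, hz8, hz9, r1, r2, r3, r4, r5, r6, rz1, rz2, rz3, rz4, rz5, rz6, rz7, rz8, rz9, lie_self, φx₁, φx₂, φe₁, φf₁, φe₂, φf₂, smul_smul]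
    try module
  have k24 : φ0 (B' e₁ e₂) = ⁅φ0 e₁, φ0 e₂⁆ := by
    rw [hB' _ _ _ me₁ _ me₂, hE1011]
    simp [h1, h2, h3, h4, h5, h6, hz1, hz2, hz3, hz4, hz5, hz6, hz7, hz8, hz9, r1, r2, r3, r4, r5, r6, rz1, rz2, rz3, rz4, rz5, rz6, rz7, rz8, rz9, lie_self, φx₁, φx₂, φe₁, φf₁, φe₂, φf₂, smul_smul]
    try module
  have k25 : φ0 (B' e₁ f₂) = ⁅φ0 e₁, φ0 f₂⁆ := by
    rw [hB' _ _ _ me₁ _ mf₂, hE1011]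
    simp [h1, h2, h3, h4, h5, h6, hz1, hz2, hz3, hz4, hz5, hz6, hz7, hz8, hz9, r1, r2, r3, r4, r5, r6, rz1, rz2, rz3, rz4, rz5, rz6, rz7, rz8, rz9, lie_self, φx₁, φx₂, φe₁, φf₁, φe₂, φf₂, smul_smul]
    try module
  have k30 : φ0 (B' f₁ x₁) = ⁅φ0 f₁, φ0 x₁⁆ := by
    rw [hB' _ _ _ mf₁ _ mx₁, hE1000]
    simp [h1, h2, h3, h4, h5, h6, hz1, hz2, hz3, hz4, hz5, hz6, hz7, hz8, hz9, r1, r2, r3, r4, r5, r6, rz1, rz2, rz3, rz4, rz5, rz6, rz7, rz8, rz9, lie_self, φx₁, φx₂, φe₁, φf₁, φe₂, φf₂, smul_smul]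
    try module
  have k31 : φ0 (B' f₁ x₂) = ⁅φ0 f₁, φ0 x₂⁆ := by
    rw [hB' _ _ _ mf₁ _ mx₂, hE1000]
    simp [h1, h2, h3, h4, h5, h6, hz1, hz2, hz3, hz4, hz5, hz6, hz7, hz8, hz9, r1, r2, r3, r4, r5, r6, rz1, rz2, rz3, rz4, rz5, rz6, rz7, rz8, rz9, lie_self, φx₁, φx₂, φe₁, φf₁, φe₂, φf₂, smul_smul]
    try module
  have k32 : φ0 (B' f₁ e₁) = ⁅φ0 f₁, φ0 e₁⁆ := by
    rw [hB' _ _ _ mf₁ _ me₁, hE1010]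
    simp [h1, h2, h3, h4, h5, h6, hz1, hz2, hz3, hz4, hz5, hz6, hz7, hz8, hz9, r1, r2, r3, r4, r5, r6, rz1, rz2, rz3, rz4, rz5, rz6, rz7, rz8, rz9, lie_self, φx₁, φx₂, φe₁, φf₁, φe₂, φf₂, smul_smul]
    try module
  have k33 : φ0 (B' f₁ f₁) = ⁅φ0 f₁, φ0 f₁⁆ := by
    rw [hB' _ _ _ mf₁ _ mf₁, hE1010]
    simp [h1, h2, h3, h4, h5, h6, hz1, hz2, hz3, hz4, hz5, hz6, hz7, hz8, hz9, r1, r2, r3, r4, r5, r6, rz1, rz2, rz3, rz4, rz5, rz6, rz7, rz8, rz9, lie_self, φx₁, φx₂, φe₁, φf₁, φe₂, φf₂, smul_smul]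
    try module
  have k34 : φ0 (B' f₁ e₂) = ⁅φ0 f₁, φ0 e₂⁆ := by
    rw [hB' _ _ _ mf₁ _ me₂, hE1011]
    simp [h1, h2, h3, h4, h5, h6, hz1, hz2, hz3, hz4, hz5, hz6, hz7, hz8, hz9, r1, r2, r3, r4, r5, r6, rz1, rz2, rz3, rz4, rz5, rz6, rz7, rz8, rz9, lie_self, φx₁, φx₂, φe₁, φf₁, φe₂, φf₂, smul_smul]
    try module
  have k35 : φ0 (B' f₁ f₂) = ⁅φ0 f₁, φ0 f₂⁆ := by
    rw [hB' _ _ _ mf₁ _ mf₂, hE1011]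
    simp [h1, h2, h3, h4, h5, h6, hz1, hz2, hz3, hz4, hz5, hz6, hz7, hz8, hz9, r1, r2, r3, r4, r5, r6, rz1, rz2, rz3, rz4, rz5, rz6, rz7, rz8, rz9, lie_self, φx₁, φx₂, φe₁, φf₁, φe₂, φf₂, smul_smul]
    try module
  have k40 : φ0 (B' e₂ x₁) = ⁅φ0 e₂, φ0 x₁⁆ := by
    rw [hB' _ _ _ me₂ _ mx₁, hE1100]
    simp [h1, h2, h3, h4, h5, h6, hz1, hz2, hz3, hz4, hz5, hz6, hz7, hz8, hz9, r1, r2, r3, r4, r5, r6, rz1, rz2, rz3, rz4, rz5, rz6, rz7, rz8, rz9, lie_self, φx₁, φx₂, φe₁, φf₁, φe₂, φf₂, smul_smul]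
    try module
  have k41 : φ0 (B' e₂ x₂) = ⁅φ0 e₂, φ0 x₂⁆ := by
    rw [hB' _ _ _ me₂ _ mx₂, hE1100]
    simp [h1, h2, h3, h4, h5, h6, hz1, hz2, hz3, hz4, hz5, hz6, hz7, hz8, hz9, r1, r2, r3, r4, r5, r6, rz1, rz2, rz3, rz4, rz5, rz6, rz7, rz8, rz9, lie_self, φx₁, φx₂, φe₁, φf₁, φe₂, φf₂, smul_smul]
    try module
  have k42 : φ0 (B' e₂ e₁) = ⁅φ0 e₂, φ0 e₁⁆ := by
    rw [hB' _ _ _ me₂ _ me₁, hE1110]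
    simp [h1, h2, h3, h4, h5, h6, hz1, hz2, hz3, hz4, hz5, hz6, hz7, hz8, hz9, r1, r2, r3, r4, r5, r6, rz1, rz2, rz3, rz4, rz5, rz6, rz7, rz8, rz9, lie_self, φx₁, φx₂, φe₁, φf₁, φe₂, φf₂, smul_smul]
    try module
  have k43 : φ0 (B' e₂ f₁) = ⁅φ0 e₂, φ0 f₁⁆ := by
    rw [hB' _ _ _ me₂ _ mf₁, hE1110]
    simp [h1, h2, h3, h4, h5, h6, hz1, hz2, hz3, hz4, hz5, hz6, hz7, hz8, hz9, r1, r2, r3, r4, r5, r6, rz1, rz2, rz3, rz4, rz5, rz6, rz7, rz8, rz9, lie_self, φx₁, φx₂, φe₁, φf₁, φe₂, φf₂, smul_smul]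
    try module
  have k44 : φ0 (B' e₂ e₂) = ⁅φ0 e₂, φ0 e₂⁆ := by
    rw [hB' _ _ _ me₂ _ me₂, hE1111]
    simp [h1, h2, h3, h4, h5, h6, hz1, hz2, hz3, hz4, hz5, hz6, hz7, hz8, hz9, r1, r2, r3, r4, r5, r6, rz1, rz2, rz3, rz4, rz5, rz6, rz7, rz8, rz9, lie_self, φx₁, φx₂, φe₁, φf₁, φe₂, φf₂, smul_smul]
    try module
  have k45 : φ0 (B' e₂ f₂) = ⁅φ0 e₂, φ0 f₂⁆ := by
    rw [hB' _ _ _ me₂ _ mf₂, hE1111]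
    simp [h1, h2, h3, h4, h5, h6, hz1, hz2, hz3, hz4, hz5, hz6, hz7, hz8, hz9, r1, r2, r3, r4, r5, r6, rz1, rz2, rz3, rz4, rz5, rz6, rz7, rz8, rz9, lie_self, φx₁, φx₂, φe₁, φf₁, φe₂, φf₂, smul_smul]
    try module
  have k50 : φ0 (B' f₂ x₁) = ⁅φ0 f₂, φ0 x₁⁆ := by
    rw [hB' _ _ _ mf₂ _ mx₁, hE1100]
    simp [h1, h2, h3, h4, h5, h6, hz1, hz2, hz3, hz4, hz5, hz6, hz7, hz8, hz9, r1, r2, r3, r4, r5, r6, rz1, rz2, rz3, rz4, rz5, rz6, rz7, rz8, rz9, lie_self, φx₁, φx₂, φe₁, φf₁, φe₂, φf₂, smul_smul]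
    try module
  have k51 : φ0 (B' f₂ x₂) = ⁅φ0 f₂, φ0 x₂⁆ := by
    rw [hB' _ _ _ mf₂ _ mx₂, hE1100]
    simp [h1, h2, h3, h4, h5, h6, hz1, hz2, hz3, hz4, hz5, hz6, hz7, hz8, hz9, r1, r2, r3, r4, r5, r6, rz1, rz2, rz3, rz4, rz5, rz6, rz7, rz8, rz9, lie_self, φx₁, φx₂, φe₁, φf₁, φe₂, φf₂, smul_smul]
    try module
  have k52 : φ0 (B' f₂ e₁) = ⁅φ0 f₂, φ0 e₁⁆ := by
    rw [hB' _ _ _ mf₂ _ me₁, hE1110]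
    simp [h1, h2, h3, h4, h5, h6, hz1, hz2, hz3, hz4, hz5, hz6, hz7, hz8, hz9, r1, r2, r3, r4, r5, r6, rz1, rz2, rz3, rz4, rz5, rz6, rz7, rz8, rz9, lie_self, φx₁, φx₂, φe₁, φf₁, φe₂, φf₂, smul_smul]
    try module
  have k53 : φ0 (B' f₂ f₁) = ⁅φ0 f₂, φ0 f₁⁆ := by
    rw [hB' _ _ _ mf₂ _ mf₁, hE1110]
    simp [h1, h2, h3, h4, h5, h6, hz1, hz2, hz3, hz4, hz5, hz6, hz7, hz8, hz9, r1, r2, r3, r4, r5, r6, rz1, rz2, rz3, rz4, rz5, rz6, rz7, rz8, rz9, lie_self, φx₁, φx₂, φe₁, φf₁, φe₂, φf₂, smul_smul]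
    try module
  have k54 : φ0 (B' f₂ e₂) = ⁅φ0 f₂, φ0 e₂⁆ := by
    rw [hB' _ _ _ mf₂ _ me₂, hE1111]
    simp [h1, h2, h3, h4, h5, h6, hz1, hz2, hz3, hz4, hz5, hz6, hz7, hz8, hz9, r1, r2, r3, r4, r5, r6, rz1, rz2, rz3, rz4, rz5, rz6, rz7, rz8, rz9, lie_self, φx₁, φx₂, φe₁, φf₁, φe₂, φf₂, smul_smul]
    try module
  have k55 : φ0 (B' f₂ f₂) = ⁅φ0 f₂, φ0 f₂⁆ := by
    rw [hB' _ _ _ mf₂ _ mf₂, hE1111]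
    simp [h1, h2, h3, h4, h5, h6, hz1, hz2, hz3, hz4, hz5, hz6, hz7, hz8, hz9, r1, r2, r3, r4, r5, r6, rz1, rz2, rz3, rz4, rz5, rz6, rz7, rz8, rz9, lie_self, φx₁, φx₂, φe₁, φf₁, φe₂, φf₂, smul_smul]
    try module
  have hbil : B'.compr₂ φ0 = Br.compl₁₂ φ0 φ0 := by
    refine b.ext fun i => b.ext fun j => ?_
    rw [hb, hb]
    fin_cases i <;> fin_cases j
    exacts [k00, k01, k02, k03, k04, k05, k10, k11, k12, k13, k14, k15, k20, k21, k22, k23, k24, k25, k30, k31, k32, k33, k34, k35, k40, k41, k42, k43, k44, k45, k50, k51, k52, k53, k54, k55]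
  have key : ∀ x y : L, φ0 (B' x y) = ⁅φ0 x, φ0 y⁆ := by
    intro x y
    have := DFunLike.congr_fun (DFunLike.congr_fun hbil x) y
    simpa [Br] using this
  have hφinj : Function.Injective φ0 := by
    intro a c h
    have : ψ0 (φ0 a) = ψ0 (φ0 c) := by rw [h]
    simpa [← LinearMap.comp_apply, hcomp2] using this
  refine ⟨?_, ?_, ?_, ?_⟩
  · intro x
    apply hφinj
    rw [key, lie_self, map_zero]
  · intro x y z
    apply hφinj
    simp only [map_add, key, map_zero]
    exact lie_jacobi _ _ _
  · refine ⟨φ, fun x y => key x y, fun g => ?_⟩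
    have hφ0 : (φ : L →ₗ[ℂ] L) = φ0 := rfl
    rcases hgcases g with rfl | rfl | rfl | rfl
    · rw [hL00, hφ0, Submodule.map_span, Set.image_insert_eq, Set.image_singleton,
        φx₁, φx₂]
    · rw [hL01, hφ0, Submodule.map_bot]
    · rw [hL10, hφ0, Submodule.map_span, Set.image_insert_eq, Set.image_singleton,
        φe₁, φf₁]
      have m1 : f₁ ∈ Submodule.span ℂ ({e₁, f₁} : Set L) :=
        Submodule.subset_span (by simp)
      have m2 : -e₁ ∈ Submodule.span ℂ ({e₁, f₁} : Set L) :=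
        neg_mem (Submodule.subset_span (by simp))
      have m3 : f₁ ∈ Submodule.span ℂ ({f₁, -e₁} : Set L) :=
        Submodule.subset_span (by simp)
      have m4 : e₁ ∈ Submodule.span ℂ ({f₁, -e₁} : Set L) := by
        have : -e₁ ∈ Submodule.span ℂ ({f₁, -e₁} : Set L) :=
          Submodule.subset_span (by simp)
        simpa using neg_mem this
      apply le_antisymm
      · rw [Submodule.span_le, Set.insert_subset_iff, Set.singleton_subset_iff]
        exact ⟨m1, m2⟩
      · rw [Submodule.span_le, Set.insert_subset_iff, Set.singleton_subset_iff]
        exact ⟨m4, m3⟩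
    · rw [hL11, hφ0, Submodule.map_span, Set.image_insert_eq, Set.image_singleton,
        φe₂, φf₂]
  · rintro ⟨ρ, hρ, hscal⟩
    obtain ⟨c₀, hc₀, hρ00⟩ := hscal (0, 0)
    obtain ⟨c₁, hc₁, hρ10⟩ := hscal (1, 0)
    obtain ⟨c₂, hc₂, hρ11⟩ := hscal (1, 1)
    have he₁ : e₁ ≠ 0 := by simpa [hv2] using hind.ne_zero 2
    have he₂ : e₂ ≠ 0 := by simpa [hv4] using hind.ne_zero 4
    have hBxe : B' x₁ e₁ = (-2 : ℂ) • e₁ := by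
      rw [hB' _ _ _ mx₁ _ me₁, hE0010, h1]; module
    have hBxe2 : B' x₂ e₂ = (2 : ℂ) • e₂ := by
      rw [hB' _ _ _ mx₂ _ me₂, hE0011, h4]; module
    have E1 := hρ x₁ e₁
    simp only [h1, map_smul, LinearMap.smul_apply, hρ00 x₁ mx₁, hρ10 e₁ me₁,
      hBxe, smul_smul] at E1
    have hA : (2 : ℂ) * c₁ = -(c₁ * (c₀ * 2)) :=
      smul_left_injective ℂ he₁ (by simpa [neg_smul] using E1)
    have E2 := hρ x₂ e₂
    simp only [h4, map_smul, LinearMap.smul_apply, hρ00 x₂ mx₂, hρ11 e₂ me₂,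
      hBxe2, smul_smul] at E2
    have hB : (2 : ℂ) * c₂ = c₂ * (c₀ * 2) :=
      smul_left_injective ℂ he₂ (by simpa using E2)
    have k1 : c₀ = -1 := by
      have hq : c₁ * (2 + 2 * c₀) = 0 := by linear_combination hA
      rcases mul_eq_zero.1 hq with h | h
      · exact absurd h hc₁
      · linear_combination h / 2
    have k2 : c₀ = 1 := by
      have hq2 : c₂ * (2 - 2 * c₀) = 0 := by linear_combination hB
      rcases mul_eq_zero.1 hq2 with h | h
      · exact absurd h hc₂
      · linear_combination -h / 2
    rw [k1] at k2
    norm_num at k2
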